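/- Let x_1 < ... < x_k with k ≥ 2 and q > 0, and let Z_{ij} = e^{-q|x_i - x_j|}. If w solves Zw = 1, then w_1 = 1/(1 + e^{-q(x_2 - x_1)}). -/
import Mathlib


theorem stmt4 (k : ℕ) (hk : 2 ≤ k) (q : ℝ) (hq : 0 < q) (x : ℕ → ℝ)
    (hx : ∀ r, r + 1 < k → x r < x (r + 1))
    (Z : Matrix (Fin k) (Fin k) ℝ)
    (hZ : ∀ i j : Fin k, Z i j = Real.exp (-(q * |x i - x j|)))
    (w : Fin k → ℝ) (hw : Z.mulVec w = fun _ => 1) :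
    w ⟨0, by omega⟩ = 1 / (1 + Real.exp (-(q * (x 1 - x 0)))) := by
  have h0 : (0:ℕ) < k := by omega
  have h1 : (1:ℕ) < k := by omega
  set e := Real.exp (-(q * (x 1 - x 0))) with he
  have hd : x 0 < x 1 := hx 0 h1
  have hepos : 0 < e := Real.exp_pos _
  have he1 : e < 1 := by
    rw [he, Real.exp_lt_one_iff]
    nlinarith
  have mono : ∀ s r : ℕ, r ≤ s → s < k → x r ≤ x s := by
    intro s
    induction s with
    | zero => intro r hr _; interval_cases r; exact le_rfl
    | succ n ih =>
      intro r hr hs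
      rcases Nat.eq_or_lt_of_le hr with h | h
      · rw [h]
      · have h2 := hx n hs
        have h3 := ih r (by omega) (by omega)
        linarith
  have r0 := congrFun hw ⟨0, h0⟩
  have r1 := congrFun hw ⟨1, h1⟩
  simp only [Matrix.mulVec, dotProduct] at r0 r1
  have coeff : ∀ j : Fin k, j ≠ ⟨0, h0⟩ →
      (Z ⟨0, h0⟩ j - e * Z ⟨1, h1⟩ j) * w j = 0 := by
    intro j hj
    have hj1 : 1 ≤ (j : ℕ) := by
      rcases Nat.eq_zero_or_pos (j : ℕ) with h | h
      · exact absurd (Fin.ext h) hj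
      · exact h
    have hx1j : x 1 ≤ x (j : ℕ) := mono j 1 hj1 j.isLt
    rw [hZ, hZ]
    have a0 : |x ((⟨0, h0⟩ : Fin k) : ℕ) - x (j : ℕ)| = (x 1 - x 0) + (x (j:ℕ) - x 1) := by
      simp only []
      rw [abs_sub_comm, abs_of_nonneg (by linarith)]
      ring
    have a1 : |x ((⟨1, h1⟩ : Fin k) : ℕ) - x (j : ℕ)| = x (j:ℕ) - x 1 := by
      simp only []
      rw [abs_sub_comm, abs_of_nonneg (by linarith)]
    rw [a0, a1, show -(q * ((x 1 - x 0) + (x (j:ℕ) - x 1))) =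
      (-(q * (x 1 - x 0))) + (-(q * (x (j:ℕ) - x 1))) by ring, Real.exp_add, ← he]
    ring
  have sum_eq : ∑ j, (Z ⟨0, h0⟩ j - e * Z ⟨1, h1⟩ j) * w j
      = (1 - e * e) * w ⟨0, h0⟩ := by
    rw [Finset.sum_eq_single ⟨0, h0⟩ (fun j _ hj => coeff j hj) (by simp)]
    rw [hZ, hZ]
    have b0 : |x ((⟨0, h0⟩ : Fin k) : ℕ) - x ((⟨0, h0⟩ : Fin k) : ℕ)| = 0 := by simp
    have b1 : |x ((⟨1, h1⟩ : Fin k) : ℕ) - x ((⟨0, h0⟩ : Fin k) : ℕ)| = x 1 - x 0 := by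
      simp only []
      rw [abs_of_nonneg (by linarith)]
    rw [b0, b1, ← he]
    simp
  have sum_eq2 : ∑ j, (Z ⟨0, h0⟩ j - e * Z ⟨1, h1⟩ j) * w j = 1 - e := by
    have : ∀ j : Fin k, (Z ⟨0, h0⟩ j - e * Z ⟨1, h1⟩ j) * w j
        = Z ⟨0, h0⟩ j * w j - e * (Z ⟨1, h1⟩ j * w j) := by intro j; ring
    simp only [this, Finset.sum_sub_distrib, ← Finset.mul_sum, r0, r1, mul_one]
  have key : (1 - e * e) * w ⟨0, h0⟩ = 1 - e := by rw [← sum_eq, sum_eq2]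
  have hne : (1 : ℝ) - e ≠ 0 := by linarith
  have hne2 : (1 : ℝ) + e ≠ 0 := by linarith
  have : (1 - e) * ((1 + e) * w ⟨0, h0⟩) = (1 - e) * 1 := by ring_nf; nlinarith [key]
  have h4 := mul_left_cancel₀ hne this
  field_simp
  linarith [h4]
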